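/- Let G be a stable weighted multigraph of genus g and let d be a multidegree of total degree g − 1 on G. Then d is stable if and only if there exists a totally cyclic orientation O of G with d = d_O. -/

import Mathlib

open Finset

/-- A multigraph on vertex type `V` with edge type `E`: each edge `e` joins the
(possibly equal) vertices `fst e` and `snd e` (loops and multiple edges allowed). -/
structure Multigraph (V E : Type) where
  fst : E → V
  snd : E → V

/-- An orientation of a multigraph: each edge gets a tail and a head, which are its
two endpoints (in one of the two possible orders). -/
structure GraphOrientation {V E : Type} (G : Multigraph V E) where
  tail : E → V
  head : E → V
  compat : ∀ e, (tail e = G.fst e ∧ head e = G.snd e) ∨ (tail e = G.snd e ∧ head e = G.fst e)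

variable {V E : Type} [Fintype V] [Fintype E] [DecidableEq V] [DecidableEq E]

namespace Multigraph

/-- `E(S)`: the set of edges with both endpoints in `S`. -/
def edgesIn (G : Multigraph V E) (S : Finset V) : Finset E :=
  univ.filter fun e => G.fst e ∈ S ∧ G.snd e ∈ S

/-- Membership in the cut of `S`: exactly one endpoint of `e` lies in `S`. -/
def InCut (G : Multigraph V E) (S : Finset V) (e : E) : Prop :=
  (G.fst e ∈ S ∧ G.snd e ∉ S) ∨ (G.fst e ∉ S ∧ G.snd e ∈ S)

instance (G : Multigraph V E) (S : Finset V) : DecidablePred (G.InCut S) := fun e =>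
  decidable_of_iff ((G.fst e ∈ S ∧ G.snd e ∉ S) ∨ (G.fst e ∉ S ∧ G.snd e ∈ S)) Iff.rfl

/-- `ε(S)`: the number of edges with exactly one endpoint in `S`. -/
def cutCard (G : Multigraph V E) (S : Finset V) : ℕ :=
  (univ.filter fun e => G.InCut S e).card

/-- The genus `g(S) = |E(S)| - |S| + 1 + Σ_{v ∈ S} g_v` of a subset of vertices,
for the vertex weight function `w`. -/
def genusOf (G : Multigraph V E) (w : V → ℕ) (S : Finset V) : ℤ :=
  ((G.edgesIn S).card : ℤ) - S.card + 1 + ∑ v ∈ S, (w v : ℤ)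

/-- The genus of the weighted multigraph. -/
def genus (G : Multigraph V E) (w : V → ℕ) : ℤ := G.genusOf w univ

/-- The valence of a vertex: the number of edge-ends at it (a loop counts twice). -/
def valence (G : Multigraph V E) (v : V) : ℕ :=
  (univ.filter fun e => G.fst e = v).card + (univ.filter fun e => G.snd e = v).card

/-- Adjacency via some edge. -/
def Adj (G : Multigraph V E) (a b : V) : Prop :=
  ∃ e, (G.fst e = a ∧ G.snd e = b) ∨ (G.fst e = b ∧ G.snd e = a)

/-- The multigraph is connected: nonempty, and any two vertices are joined by a path. -/
def Connected (G : Multigraph V E) : Prop :=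
  Nonempty V ∧ ∀ a b : V, Relation.ReflTransGen G.Adj a b

/-- Adjacency inside the induced subgraph on `S` (via an edge of `E(S)`). -/
def AdjOn (G : Multigraph V E) (S : Finset V) (a b : V) : Prop :=
  ∃ e, ((G.fst e = a ∧ G.snd e = b) ∨ (G.fst e = b ∧ G.snd e = a)) ∧
    G.fst e ∈ S ∧ G.snd e ∈ S

/-- The induced subgraph on `S` is connected. -/
def ConnectedOn (G : Multigraph V E) (S : Finset V) : Prop :=
  ∀ a ∈ S, ∀ b ∈ S, Relation.ReflTransGen (G.AdjOn S) a b

/-- The weighted multigraph is stable: connected, of genus at least 2, and every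
vertex of weight 0 has valence at least 3. -/
def IsStable (G : Multigraph V E) (w : V → ℕ) : Prop :=
  G.Connected ∧ 2 ≤ G.genus w ∧ ∀ v, w v = 0 → 3 ≤ G.valence v

/-- A multidegree `d : V → ℤ` of total degree `δ = ∑ v, d v` is semistable if for every
nonempty `S ⊆ V`:
`(2g-2)(g(S)-1) + (δ-g+1)(2g(S)-2+ε(S)) ≤ (2g-2) Σ_{v ∈ S} d v`. -/
def Semistable (G : Multigraph V E) (w : V → ℕ) (d : V → ℤ) : Prop :=
  ∀ S : Finset V, S.Nonempty →
    (2 * G.genus w - 2) * (G.genusOf w S - 1) +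
      ((∑ v, d v) - G.genus w + 1) * (2 * G.genusOf w S - 2 + (G.cutCard S : ℤ)) ≤
    (2 * G.genus w - 2) * ∑ v ∈ S, d v

/-- A multidegree is stable if it is semistable and the semistability inequality is
strict for every nonempty proper subset of vertices. -/
def StableDeg (G : Multigraph V E) (w : V → ℕ) (d : V → ℤ) : Prop :=
  G.Semistable w d ∧ ∀ S : Finset V, S.Nonempty → S ≠ univ →
    (2 * G.genus w - 2) * (G.genusOf w S - 1) +
      ((∑ v, d v) - G.genus w + 1) * (2 * G.genusOf w S - 2 + (G.cutCard S : ℤ)) <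
    (2 * G.genus w - 2) * ∑ v ∈ S, d v

/-- A multidegree is effective if it is nonnegative at every vertex. -/
def Effective (d : V → ℤ) : Prop := ∀ v, 0 ≤ d v

end Multigraph

namespace GraphOrientation

variable {G : Multigraph V E}

/-- The indegree of a vertex: the number of edges with head `v`. -/
def indeg (O : GraphOrientation G) (v : V) : ℕ :=
  (univ.filter fun e => O.head e = v).card

/-- The multidegree `d_O` associated to an orientation: `d_O(v) = g_v - 1 + indeg_O(v)`. -/
def multidegree (O : GraphOrientation G) (w : V → ℕ) : V → ℤ :=
  fun v => (w v : ℤ) - 1 + (O.indeg v : ℤ)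

/-- The edge `e₀` lies on a directed cycle of `O`: there are `k ≥ 1` distinct vertices
`vs` and distinct edges `es`, with `es i` directed from `vs i` to `vs (i+1)`,
one of the edges being `e₀`. -/
def EdgeInCycle (O : GraphOrientation G) (e₀ : E) : Prop :=
  ∃ (k : ℕ) (vs : Fin (k + 1) → V) (es : Fin (k + 1) → E),
    Function.Injective vs ∧ Function.Injective es ∧ (∃ i, es i = e₀) ∧
    ∀ i, O.tail (es i) = vs i ∧ O.head (es i) = vs (i + 1)

/-- The orientation contains a directed cycle. -/
def HasDirectedCycle (O : GraphOrientation G) : Prop :=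
  ∃ (k : ℕ) (vs : Fin (k + 1) → V) (es : Fin (k + 1) → E),
    Function.Injective vs ∧ Function.Injective es ∧
    ∀ i, O.tail (es i) = vs i ∧ O.head (es i) = vs (i + 1)

/-- The orientation is acyclic: it contains no directed cycle. -/
def Acyclic (O : GraphOrientation G) : Prop := ¬ O.HasDirectedCycle

/-- The orientation is totally cyclic: every edge lies on a directed cycle. -/
def TotallyCyclic (O : GraphOrientation G) : Prop := ∀ e, O.EdgeInCycle e

/-- The cut of `S` is directed towards `S`: every edge of the cut has its head in `S`. -/
def CutTowards (O : GraphOrientation G) (S : Finset V) : Prop :=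
  ∀ e, G.InCut S e → O.head e ∈ S

/-- The cut of `S` is directed away from `S`: every edge of the cut has its tail in `S`. -/
def CutAway (O : GraphOrientation G) (S : Finset V) : Prop :=
  ∀ e, G.InCut S e → O.tail e ∈ S

end GraphOrientation

namespace StableAux

open Finset

/-- extract a duplicate-free chain from reflexive-transitive closure -/
lemma exists_nodup_chain {α : Type*} (r : α → α → Prop) {a b : α} (h : Relation.ReflTransGen r a b) :
    ∃ p : List α, p.Chain' r ∧ p.head? = some a ∧ p.getLast? = some b ∧ p.Nodup := by
  induction h using Relation.ReflTransGen.head_induction_on with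
  | refl => exact ⟨[b], List.isChain_singleton b, by simp⟩
  | head hac _ ih =>
    obtain ⟨p, hch, hhd, hlast, hnd⟩ := ih
    rename_i a c _
    by_cases ha : a ∈ p
    · obtain ⟨l₁, l₂, rfl⟩ := List.append_of_mem ha
      refine ⟨a :: l₂, hch.suffix ⟨l₁, rfl⟩, rfl, ?_, hnd.sublist (List.suffix_append _ _).sublist⟩
      rw [List.getLast?_append] at hlast
      rwa [Option.or_of_isSome (by simp)] at hlast
    · cases p with
      | nil => simp at hhd
      | cons c' p' =>
        have hcc : c = c' := by simpa using hhd.symm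
        subst hcc
        exact ⟨a :: c :: p', List.isChain_cons_cons.mpr ⟨hac, hch⟩, rfl, by simpa using hlast,
          List.nodup_cons.mpr ⟨ha, hnd⟩⟩

/-- extract the edge list underlying a chain of edge-steps -/
lemma chain_edges {α β : Type*} (T H : β → α) :
    ∀ (p : List α), p.Chain' (fun x y => ∃ e, T e = x ∧ H e = y) →
      ∃ es : List β, es.map T = p.dropLast ∧ es.map H = p.tail
  | [], _ => ⟨[], by simp⟩
  | [a], _ => ⟨[], by simp⟩
  | a :: c :: rest, hch => by
    replace hch := List.isChain_cons_cons.mp hch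
    obtain ⟨⟨e, he1, he2⟩, hch'⟩ := hch
    obtain ⟨es', h1, h2⟩ := chain_edges T H (c :: rest) hch'
    exact ⟨e :: es', by simp [he1, h1], by simp [he2, h2]⟩

open Fin.NatCast in
/-- a cyclic sequence that leaves a set must re-enter it -/
lemma cyclic_cross {V : Type*} {k : ℕ} (vs : Fin (k+1) → V) (S : Finset V) (i : Fin (k+1))
    (h1 : vs i ∈ S) (h2 : vs (i+1) ∉ S) : ∃ j, vs j ∉ S ∧ vs (j+1) ∈ S := by
  by_contra hc
  push_neg at hc
  have key : ∀ m : ℕ, vs (i + 1 + (m : Fin (k+1))) ∉ S := by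
    intro m
    induction m with
    | zero => simpa using h2
    | succ m ih =>
      have := hc _ ih
      have hcast : ((m + 1 : ℕ) : Fin (k+1)) = (m : Fin (k+1)) + 1 := by push_cast; ring
      rw [hcast, ← add_assoc]
      exact fun hmem => this hmem
  have hk : i + 1 + ((k : ℕ) : Fin (k+1)) = i := by
    have h0 : ((1 + k : ℕ) : Fin (k+1)) = 0 := by
      rw [Fin.natCast_eq_zero]; exact ⟨1, by ring⟩
    have h1' : ((1 + k : ℕ) : Fin (k+1)) = (1 : Fin (k+1)) + ((k : ℕ) : Fin (k+1)) := by
      push_cast; ring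
    rw [add_assoc, ← h1', h0, add_zero]
  apply key k
  rw [hk]; exact h1

/-- crossing a set boundary along a refl-trans-gen path -/
lemma rtg_cross {α : Type*} {r : α → α → Prop} (P : α → Prop) {a b : α}
    (h : Relation.ReflTransGen r a b) (ha : P a) (hb : ¬ P b) :
    ∃ x y, P x ∧ ¬ P y ∧ r x y := by
  induction h with
  | refl => exact absurd ha hb
  | tail _ hcb ih =>
    rename_i c b' _
    by_cases hc : P c
    · exact ⟨c, b', hc, hb, hcb⟩
    · exact ih hc

end StableAux
set_option linter.unusedSectionVars false
set_option linter.unnecessarySeqFocus false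
namespace StableAux

open Finset Multigraph GraphOrientation

variable {G : Multigraph V E}

lemma incut_iff (O : GraphOrientation G) (S : Finset V) (e : E) :
    G.InCut S e ↔ ((O.tail e ∈ S ∧ O.head e ∉ S) ∨ (O.tail e ∉ S ∧ O.head e ∈ S)) := by
  rcases O.compat e with ⟨h1, h2⟩ | ⟨h1, h2⟩ <;> rw [h1, h2] <;> unfold Multigraph.InCut <;> tauto

lemma edgesIn_iff (O : GraphOrientation G) (S : Finset V) (e : E) :
    e ∈ G.edgesIn S ↔ (O.tail e ∈ S ∧ O.head e ∈ S) := by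
  rcases O.compat e with ⟨h1, h2⟩ | ⟨h1, h2⟩ <;> rw [h1, h2] <;>
    simp [Multigraph.edgesIn] <;> tauto

lemma card_filter_eq_sum (f : E → V) (S : Finset V) :
    ∑ v ∈ S, (univ.filter fun e => f e = v).card = (univ.filter fun e => f e ∈ S).card := by
  rw [Finset.card_eq_sum_card_fiberwise (f := f) (s := univ.filter fun e => f e ∈ S) (t := S) (fun e he => (mem_filter.mp (Finset.mem_coe.mp he)).2)]
  refine Finset.sum_congr rfl fun v hv => ?_
  congr 1
  ext e
  simp only [mem_filter, mem_univ, true_and]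
  exact ⟨fun h => ⟨h ▸ hv, h⟩, fun h => h.2⟩

lemma sum_indeg (O : GraphOrientation G) (S : Finset V) :
    ∑ v ∈ S, (O.indeg v : ℤ) =
      ((G.edgesIn S).card : ℤ) + ((univ.filter fun e => G.InCut S e ∧ O.head e ∈ S).card : ℤ) := by
  have h1 : ∑ v ∈ S, O.indeg v = (univ.filter fun e => O.head e ∈ S).card :=
    card_filter_eq_sum O.head S
  have h2 : (univ.filter fun e => O.head e ∈ S) =
      G.edgesIn S ∪ (univ.filter fun e => G.InCut S e ∧ O.head e ∈ S) := by
    ext e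
    simp only [mem_filter, mem_univ, true_and, mem_union, edgesIn_iff O, incut_iff O]
    by_cases ht : O.tail e ∈ S <;> by_cases hh : O.head e ∈ S <;> tauto
  have h3 : Disjoint (G.edgesIn S) (univ.filter fun e => G.InCut S e ∧ O.head e ∈ S) := by
    rw [Finset.disjoint_left]
    intro e he hce
    rw [edgesIn_iff O] at he
    have := (mem_filter.mp hce).2.1
    rw [incut_iff O] at this
    tauto
  rw [← Nat.cast_sum, h1, h2, Finset.card_union_of_disjoint h3]
  push_cast
  ring

end StableAux
namespace StableAux

open Finset Multigraph GraphOrientation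

variable {G : Multigraph V E}

lemma cut_nonempty (hconn : G.Connected) {S : Finset V} (hne : S.Nonempty) (hproper : S ≠ univ) :
    ∃ e, G.InCut S e := by
  obtain ⟨a, ha⟩ := hne
  have : ∃ b, b ∉ S := by
    by_contra hb
    push_neg at hb
    exact hproper (Finset.eq_univ_iff_forall.mpr hb)
  obtain ⟨b, hb⟩ := this
  obtain ⟨x, y, hx, hy, hxy⟩ := rtg_cross (· ∈ S) (hconn.2 a b) ha hb
  obtain ⟨e, he⟩ := hxy
  rcases he with ⟨h1, h2⟩ | ⟨h1, h2⟩
  · exact ⟨e, Or.inl ⟨h1 ▸ hx, h2 ▸ hy⟩⟩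
  · exact ⟨e, Or.inr ⟨h1 ▸ hy, h2 ▸ hx⟩⟩

lemma cut_head_exists (O : GraphOrientation G) (htc : O.TotallyCyclic) (hconn : G.Connected)
    {S : Finset V} (hne : S.Nonempty) (hproper : S ≠ univ) :
    ∃ e, G.InCut S e ∧ O.head e ∈ S := by
  obtain ⟨e, he⟩ := cut_nonempty hconn hne hproper
  rcases (incut_iff O S e).mp he with ⟨ht, hh⟩ | ⟨ht, hh⟩
  · -- tail in S, head not in S: follow the cycle containing e back into S
    obtain ⟨k, vs, es, hvs, hes, ⟨i, hei⟩, hstep⟩ := htc e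
    have h1 : vs i ∈ S := by rw [← (hstep i).1, hei]; exact ht
    have h2 : vs (i + 1) ∉ S := by rw [← (hstep i).2, hei]; exact hh
    obtain ⟨j, hj1, hj2⟩ := cyclic_cross vs S i h1 h2
    refine ⟨es j, (incut_iff O S (es j)).mpr (Or.inr ⟨?_, ?_⟩), ?_⟩
    · rw [(hstep j).1]; exact hj1
    · rw [(hstep j).2]; exact hj2
    · rw [(hstep j).2]; exact hj2
  · exact ⟨e, he, hh⟩

end StableAux
set_option linter.unusedSectionVars false
namespace StableAux

open Finset Multigraph GraphOrientation

variable {G : Multigraph V E}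

lemma edgeInCycle_of_path (O : GraphOrientation G) (e₀ : E) (p : List V)
    (hch : p.Chain' (fun x y => ∃ e, O.tail e = x ∧ O.head e = y))
    (hhd : p.head? = some (O.head e₀)) (hlast : p.getLast? = some (O.tail e₀))
    (hnd : p.Nodup) : O.EdgeInCycle e₀ := by
  obtain ⟨es, hT, hH⟩ := chain_edges O.tail O.head p hch
  have hpne : p ≠ [] := by rintro rfl; simp at hhd
  set m := es.length with hm
  have hplen : p.length = m + 1 := by
    have := congrArg List.length hT
    simp only [List.length_map, List.length_dropLast] at this
    have hpos : 0 < p.length := List.length_pos_iff.mpr hpne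
    omega
  set vs : Fin (m+1) → V := fun i => p[(i : ℕ)]'(by omega) with hvs_def
  set es' : Fin (m+1) → E := fun i => if h : (i : ℕ) < m then es[(i : ℕ)] else e₀ with hes_def
  have hp0 : p[0]'(by omega) = O.head e₀ := by
    rw [← List.head_eq_getElem_zero hpne]
    exact (Option.some_injective _ (by rw [← List.head?_eq_head hpne]; exact hhd))
  have hpm : p[m]'(by omega) = O.tail e₀ := by
    have : p.getLast hpne = O.tail e₀ :=
      Option.some_injective _ (by rw [← List.getLast?_eq_getLast hpne]; exact hlast)
    rw [← this, List.getLast_eq_getElem]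
    congr 1
    omega
  have hstep : ∀ i, O.tail (es' i) = vs i ∧ O.head (es' i) = vs (i + 1) := by
    intro i
    by_cases h : (i : ℕ) < m
    · have hv1 : ((i + 1 : Fin (m+1)) : ℕ) = (i : ℕ) + 1 := by
        rw [Fin.val_add_one]
        split
        · rename_i heq; exact absurd (congrArg Fin.val heq) (by simp; omega)
        · rfl
      constructor
      · rw [hes_def]
        simp only [dif_pos h]
        have h1 : (es.map O.tail)[(i:ℕ)]'(by simpa using h) = p.dropLast[(i:ℕ)]'(by simp [hT] at *; omega) := by
          simp [hT]
        rw [List.getElem_map] at h1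
        rw [h1, List.getElem_dropLast, hvs_def]
      · rw [hes_def]
        simp only [dif_pos h]
        have h1 : (es.map O.head)[(i:ℕ)]'(by simpa using h) = p.tail[(i:ℕ)]'(by simp [hH] at *; omega) := by
          simp [hH]
        rw [List.getElem_map] at h1
        rw [h1, List.getElem_tail, hvs_def]
        simp only [hv1]
    · have him : (i : ℕ) = m := by omega
      have hv1 : ((i + 1 : Fin (m+1)) : ℕ) = 0 := by
        have : i = Fin.last m := Fin.ext (by simpa using him)
        rw [this]
        simp
      rw [hes_def]
      simp only [dif_neg h]
      constructor
      · rw [hvs_def]; simp only [him]; exact hpm.symm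
      · rw [hvs_def]; simp only [hv1]; exact hp0.symm
  have hvsinj : Function.Injective vs := by
    intro i j hij
    have := List.nodup_iff_injective_get.mp hnd
      (a₁ := ⟨i, by omega⟩) (a₂ := ⟨j, by omega⟩) (by simpa [hvs_def, List.get_eq_getElem] using hij)
    exact Fin.ext (by simpa using congrArg Fin.val this)
  refine ⟨m, vs, es', hvsinj, ?_, ⟨Fin.last m, by simp [hes_def]⟩, hstep⟩
  intro i j hij
  exact hvsinj (((hstep i).1.symm.trans (by rw [hij])).trans (hstep j).1)

end StableAux

namespace StableAux

open Finset Multigraph GraphOrientation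

variable {G : Multigraph V E}

lemma totallyCyclic_of_cuts (O : GraphOrientation G)
    (h : ∀ S : Finset V, S.Nonempty → S ≠ univ → ∃ e, G.InCut S e ∧ O.head e ∈ S) :
    O.TotallyCyclic := by
  classical
  intro e₀
  set r : V → V → Prop := fun x y => ∃ e, O.tail e = x ∧ O.head e = y with hr
  set S : Finset V := univ.filter (fun v => Relation.ReflTransGen r (O.head e₀) v) with hS
  have hmemS : ∀ v, v ∈ S ↔ Relation.ReflTransGen r (O.head e₀) v := by
    intro v; simp [hS]
  have hclosed : ∀ e, O.tail e ∈ S → O.head e ∈ S := fun e hte =>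
    (hmemS _).mpr (((hmemS _).mp hte).tail ⟨e, rfl, rfl⟩)
  by_cases hte : O.tail e₀ ∈ S
  · obtain ⟨p, hch, hhd, hlast, hnd⟩ := exists_nodup_chain r ((hmemS _).mp hte)
    exact edgeInCycle_of_path O e₀ p hch hhd hlast hnd
  · exfalso
    have hne : (univ \ S).Nonempty := ⟨O.tail e₀, by simp [hte]⟩
    have hheadS : O.head e₀ ∈ S := (hmemS _).mpr Relation.ReflTransGen.refl
    have hproper : univ \ S ≠ univ := by
      intro hu
      have h2 := Finset.eq_univ_iff_forall.mp hu (O.head e₀)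
      rw [mem_sdiff] at h2
      exact h2.2 hheadS
    obtain ⟨e', hcut, hhd'⟩ := h _ hne hproper
    have hh2 : O.head e' ∉ S := by simpa using hhd'
    rcases (incut_iff O _ e').mp hcut with ⟨h1, h2⟩ | ⟨h1, h2⟩
    · exact h2 hhd'
    · have : O.tail e' ∈ S := by simpa using h1
      exact hh2 (hclosed _ this)

end StableAux
set_option linter.unusedSectionVars false
namespace StableAux

open Finset Multigraph GraphOrientation

/-- The orientation associated to a boolean labelling of the edges. -/
def bOrient (G : Multigraph V E) (b : E → Bool) : GraphOrientation G where
  tail e := if b e then G.snd e else G.fst e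
  head e := if b e then G.fst e else G.snd e
  compat e := by by_cases h : b e <;> simp [h]

variable {G : Multigraph V E}

lemma card_filter_mem (es : List E) (hnd : es.Nodup) (f : E → V) (v : V) :
    (univ.filter fun e => e ∈ es ∧ f e = v).card = (es.map f).count v := by
  have h1 : univ.filter (fun e => e ∈ es ∧ f e = v) = (es.filter (fun e => f e = v)).toFinset := by
    ext e; simp [List.mem_filter]
  rw [h1, List.card_toFinset, List.Nodup.dedup (hnd.filter _)]
  rw [List.count, List.countP_map]
  rw [List.countP_eq_length_filter]
  congr 1

lemma indeg_flip (b : E → Bool) (es : List E) (hnd : es.Nodup) (v : V) :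
    ((bOrient G (fun e => if e ∈ es then !(b e) else b e)).indeg v : ℤ) =
      ((bOrient G b).indeg v : ℤ) + ((es.map (bOrient G b).tail).count v : ℤ)
        - ((es.map (bOrient G b).head).count v : ℤ) := by
  classical
  have hhead : ∀ e, (bOrient G (fun e => if e ∈ es then !(b e) else b e)).head e =
      if e ∈ es then (bOrient G b).tail e else (bOrient G b).head e := by
    intro e
    by_cases h : e ∈ es <;> by_cases hb : b e <;> simp [bOrient, h, hb]
  have hs : univ.filter (fun e => (bOrient G (fun e => if e ∈ es then !(b e) else b e)).head e = v) =
      univ.filter (fun e => e ∈ es ∧ (bOrient G b).tail e = v) ∪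
        univ.filter (fun e => e ∉ es ∧ (bOrient G b).head e = v) := by
    ext e
    simp only [mem_filter, mem_univ, true_and, mem_union, hhead]
    by_cases h : e ∈ es <;> simp [h]
  have hdisj : Disjoint (univ.filter (fun e => e ∈ es ∧ (bOrient G b).tail e = v))
      (univ.filter (fun e => e ∉ es ∧ (bOrient G b).head e = v)) := by
    rw [Finset.disjoint_left]
    intro e he1 he2
    simp only [mem_filter] at he1 he2
    exact he2.2.1 he1.2.1
  have hadd : (univ.filter (fun e => e ∈ es ∧ (bOrient G b).head e = v)).card
      + (univ.filter (fun e => e ∉ es ∧ (bOrient G b).head e = v)).card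
      = (bOrient G b).indeg v := by
    rw [GraphOrientation.indeg]
    rw [← Finset.card_filter_add_card_filter_not (s := univ.filter
      (fun e => (bOrient G b).head e = v)) (p := fun e => e ∈ es)]
    congr 1 <;> · rw [Finset.filter_filter]; congr 1; ext e; simp only [mem_filter, mem_univ, true_and]; tauto
  have hcard : (bOrient G (fun e => if e ∈ es then !(b e) else b e)).indeg v
      = (univ.filter (fun e => e ∈ es ∧ (bOrient G b).tail e = v)).card
        + (univ.filter (fun e => e ∉ es ∧ (bOrient G b).head e = v)).card := by
    rw [GraphOrientation.indeg, hs, Finset.card_union_of_disjoint hdisj]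
  rw [hcard, ← card_filter_mem es hnd (bOrient G b).tail v,
    ← card_filter_mem es hnd (bOrient G b).head v]
  omega

end StableAux
set_option linter.unusedSectionVars false
namespace StableAux

open Finset Multigraph GraphOrientation

variable {G : Multigraph V E}

lemma count_dropLast_tail (p : List V) (hne : p ≠ []) (x u : V)
    (hhd : p.head? = some x) (hlast : p.getLast? = some u) (v : V) :
    (p.dropLast.count v : ℤ) - p.tail.count v
      = (if v = x then 1 else 0) - (if v = u then 1 else 0) := by
  have hu : p.getLast hne = u :=
    Option.some_injective _ (by rw [← List.getLast?_eq_getLast hne]; exact hlast)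
  have hx : p.head hne = x :=
    Option.some_injective _ (by rw [← List.head?_eq_head hne]; exact hhd)
  have h1 : p = p.dropLast ++ [u] := by rw [← hu]; exact (List.dropLast_append_getLast hne).symm
  have h2 : p = x :: p.tail := by rw [← hx]; exact (List.cons_head_tail hne).symm
  have c1 : p.count v = p.dropLast.count v + if v = u then 1 else 0 := by
    conv_lhs => rw [h1]
    rw [List.count_append]
    by_cases h : v = u <;> simp [List.count_singleton', h, eq_comm] <;> exact Ne.symm h
  have c2 : p.count v = p.tail.count v + if v = x then 1 else 0 := by
    conv_lhs => rw [h2]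
    by_cases h : v = x <;> simp [List.count_cons, h] <;> exact Ne.symm h
  by_cases hx' : v = x
  · subst hx'
    by_cases hu' : v = u
    · subst hu'
      simp at c1 c2 ⊢
      omega
    · simp [hu'] at c1 c2 ⊢
      omega
  · by_cases hu' : v = u
    · subst hu'
      simp [hx'] at c1 c2 ⊢
      omega
    · simp [hx', hu'] at c1 c2 ⊢
      omega

lemma sum_indeg_univ (b : E → Bool) : ∑ v, (bOrient G b).indeg v = Fintype.card E := by
  have := card_filter_eq_sum (bOrient G b).head univ
  simpa [GraphOrientation.indeg] using this

lemma exists_orientation (n : V → ℕ) (htot : ∑ v, n v = Fintype.card E)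
    (hS : ∀ S : Finset V, (G.edgesIn S).card ≤ ∑ v ∈ S, n v) :
    ∃ b : E → Bool, ∀ v, (bOrient G b).indeg v = n v := by
  classical
  suffices h : ∀ k (b : E → Bool), (∑ v, (((bOrient G b).indeg v : ℤ) - n v).natAbs) ≤ k →
      ∃ b', ∀ v, (bOrient G b').indeg v = n v from h _ (fun _ => true) le_rfl
  intro k
  induction k with
  | zero =>
    intro b hb
    refine ⟨b, fun v => ?_⟩
    have h0 := Finset.sum_eq_zero_iff.mp (Nat.le_zero.mp hb) v (mem_univ v)
    omega
  | succ k ih =>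
    intro b hb
    by_cases h0 : ∀ v, (bOrient G b).indeg v = n v
    · exact ⟨b, h0⟩
    have hu : ∃ u, n u < (bOrient G b).indeg u := by
      by_contra hc
      push_neg at hc
      refine h0 fun v => ?_
      exact (Finset.sum_eq_sum_iff_of_le (fun i _ => hc i)).mp
        ((sum_indeg_univ b).trans htot.symm) v (mem_univ v)
    obtain ⟨u, hu⟩ := hu
    set r : V → V → Prop := fun a c => ∃ e, (bOrient G b).tail e = a ∧ (bOrient G b).head e = c
      with hr
    set S : Finset V := univ.filter (fun z => Relation.ReflTransGen r z u) with hSdef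
    have hmemS : ∀ z, z ∈ S ↔ Relation.ReflTransGen r z u := by intro z; simp [hSdef]
    have huS : u ∈ S := (hmemS u).mpr Relation.ReflTransGen.refl
    have hcl : ∀ e, (bOrient G b).head e ∈ S → (bOrient G b).tail e ∈ S := fun e h =>
      (hmemS _).mpr (Relation.ReflTransGen.head ⟨e, rfl, rfl⟩ ((hmemS _).mp h))
    have hsum : ∑ v ∈ S, (bOrient G b).indeg v = (G.edgesIn S).card := by
      have h2 : ∑ v ∈ S, (bOrient G b).indeg v
          = (univ.filter fun e => (bOrient G b).head e ∈ S).card :=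
        card_filter_eq_sum (bOrient G b).head S
      rw [h2]
      congr 1
      ext e
      simp only [mem_filter, mem_univ, true_and]
      constructor
      · intro hh
        exact (edgesIn_iff (bOrient G b) S e).mpr ⟨hcl e hh, hh⟩
      · intro hh
        exact ((edgesIn_iff (bOrient G b) S e).mp hh).2
    have hx : ∃ x ∈ S, (bOrient G b).indeg x < n x := by
      by_contra hc
      push_neg at hc
      have hsle : ∑ v ∈ S, n v ≤ ∑ v ∈ S, (bOrient G b).indeg v := Finset.sum_le_sum hc
      have h1 := hS S
      have heq := (Finset.sum_eq_sum_iff_of_le hc).mp (by omega) u huS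
      omega
    obtain ⟨x, hxS, hx⟩ := hx
    obtain ⟨p, hch, hhd, hlast, hnd⟩ := exists_nodup_chain r ((hmemS x).mp hxS)
    obtain ⟨es, hT, hH⟩ := chain_edges (bOrient G b).tail (bOrient G b).head p hch
    have hesnd : es.Nodup := by
      have h1 : (es.map (bOrient G b).tail).Nodup := by
        rw [hT]; exact hnd.sublist (List.dropLast_sublist p)
      exact h1.of_map
    have hpne : p ≠ [] := by rintro rfl; simp at hhd
    have hxu : x ≠ u := fun h => by rw [h] at hx; omega
    have hflip : ∀ v, ((bOrient G (fun e => if e ∈ es then !(b e) else b e)).indeg v : ℤ)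
        = ((bOrient G b).indeg v : ℤ)
          + ((if v = x then 1 else 0) - (if v = u then 1 else 0)) := by
      intro v
      rw [indeg_flip b es hesnd v, hT, hH]
      have := count_dropLast_tail p hpne x u hhd hlast v
      linarith
    set b' : E → Bool := fun e => if e ∈ es then !(b e) else b e with hb'
    have hpt : ∀ v, (((bOrient G b').indeg v : ℤ) - n v).natAbs
        + ((if v = x then 1 else 0) + (if v = u then 1 else 0) : ℕ)
        = (((bOrient G b).indeg v : ℤ) - n v).natAbs := by
      intro v
      have hfv := hflip v
      by_cases h1 : v = x
      · subst h1
        rw [if_pos rfl, if_neg hxu] at hfv ⊢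
        omega
      · by_cases h2 : v = u
        · subst h2
          rw [if_neg h1, if_pos rfl] at hfv ⊢
          omega
        · rw [if_neg h1, if_neg h2] at hfv ⊢
          omega
    have hsum2 : ∑ v, (((bOrient G b').indeg v : ℤ) - n v).natAbs + 2
        = ∑ v, (((bOrient G b).indeg v : ℤ) - n v).natAbs := by
      rw [← Finset.sum_congr rfl (fun v _ => hpt v), Finset.sum_add_distrib,
        Finset.sum_add_distrib]
      simp [Finset.sum_ite_eq' univ]
    have hΦpos : 0 < ∑ v, (((bOrient G b).indeg v : ℤ) - n v).natAbs := by
      rcases not_forall.mp h0 with ⟨v0, hv0⟩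
      have : 0 < ((((bOrient G b).indeg v0 : ℤ) - n v0).natAbs) := by omega
      exact lt_of_lt_of_le this (Finset.single_le_sum
        (f := fun v => (((bOrient G b).indeg v : ℤ) - n v).natAbs)
        (fun i _ => Nat.zero_le _) (mem_univ v0))
    exact ih b' (by omega)

end StableAux
open StableAux in
/-- A multidegree of total degree `g - 1` on a stable weighted multigraph
is stable iff `d = d_O` for some totally cyclic orientation `O`. -/
theorem stable_degree_g_sub_one_iff_totally_cyclic
    (G : Multigraph V E) (w : V → ℕ) (hG : G.IsStable w) (d : V → ℤ)
    (hd : ∑ v, d v = G.genus w - 1) :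
    G.StableDeg w d ↔
      ∃ O : GraphOrientation G, O.TotallyCyclic ∧ d = O.multidegree w := by
  classical
  obtain ⟨hconn, hg2, -⟩ := hG
  have hcoef : (∑ v, d v) - G.genus w + 1 = 0 := by rw [hd]; ring
  have hpos : (0:ℤ) < 2 * G.genus w - 2 := by linarith
  have hgenusOf : ∀ S : Finset V,
      G.genusOf w S - 1 = ((G.edgesIn S).card : ℤ) - S.card + ∑ v ∈ S, (w v : ℤ) := by
    intro S; rw [Multigraph.genusOf]; ring
  have hEuniv : G.edgesIn (univ : Finset V) = univ := by
    ext e; simp [Multigraph.edgesIn]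
  have hgdef : G.genus w
      = (Fintype.card E : ℤ) - Fintype.card V + 1 + ∑ v, (w v : ℤ) := by
    rw [Multigraph.genus, Multigraph.genusOf, hEuniv]
    push_cast [card_univ]
    ring
  have hred : G.StableDeg w d ↔
      ∀ S : Finset V, S.Nonempty → S ≠ univ → G.genusOf w S - 1 < ∑ v ∈ S, d v := by
    constructor
    · rintro ⟨-, hstrict⟩ S hne hproper
      have h1 := hstrict S hne hproper
      rw [hcoef, zero_mul, add_zero] at h1
      exact lt_of_mul_lt_mul_left h1 (by linarith)
    · intro h
      constructor
      · intro S hne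
        rw [hcoef, zero_mul, add_zero]
        by_cases hproper : S = univ
        · subst hproper
          apply le_of_eq
          congr 1
          rw [Multigraph.genus] at hd
          omega
        · exact le_of_lt ((mul_lt_mul_iff_right₀ hpos).mpr (h S hne hproper))
      · intro S hne hproper
        rw [hcoef, zero_mul, add_zero]
        exact (mul_lt_mul_iff_right₀ hpos).mpr (h S hne hproper)
  rw [hred]
  constructor
  · -- stable degree gives a totally cyclic orientation
    intro h
    have hn0 : ∀ v, 0 ≤ d v - w v + 1 := by
      intro v
      by_cases hv : ({v} : Finset V) = univ
      · have hc1 : (Fintype.card V : ℤ) = 1 := by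
          rw [← Finset.card_univ, ← hv]; simp
        have hsw : ∑ x, (w x : ℤ) = (w v : ℤ) := by
          rw [← Finset.sum_singleton (fun x => (w x : ℤ)) v]
          congr 1
          exact hv.symm
        have hsd : ∑ x, d x = d v := by
          rw [← Finset.sum_singleton d v]
          congr 1
          exact hv.symm
        have hE : (0:ℤ) ≤ (Fintype.card E : ℤ) := Nat.cast_nonneg _
        rw [hsd, hgdef, hc1, hsw] at hd
        linarith
      · have h1 := h {v} (singleton_nonempty v) hv
        rw [hgenusOf] at h1
        rw [Finset.sum_singleton, Finset.sum_singleton] at h1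
        have hE0 : (0:ℤ) ≤ (G.edgesIn {v}).card := Nat.cast_nonneg _
        have hcard : (({v} : Finset V).card : ℤ) = 1 := by simp
        rw [hcard] at h1
        linarith
    set N : V → ℕ := fun v => (d v - w v + 1).toNat with hN
    have hNcast : ∀ v, (N v : ℤ) = d v - w v + 1 := fun v => Int.toNat_of_nonneg (hn0 v)
    have hsumN : ∀ S : Finset V,
        (∑ v ∈ S, (N v : ℤ)) = ∑ v ∈ S, d v - ∑ v ∈ S, (w v : ℤ) + S.card := by
      intro S
      rw [Finset.sum_congr rfl (fun v _ => hNcast v), Finset.sum_add_distrib,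
        Finset.sum_sub_distrib, Finset.sum_const]
      push_cast
      ring
    have htot : ∑ v, N v = Fintype.card E := by
      have h1 : (∑ v, (N v : ℤ)) = Fintype.card E := by
        rw [hsumN univ, hd, hgdef]
        push_cast [card_univ]
        ring
      exact_mod_cast h1
    have hstrictS : ∀ S : Finset V, S.Nonempty → S ≠ univ →
        ((G.edgesIn S).card : ℤ) < ∑ v ∈ S, (N v : ℤ) := by
      intro S hne hproper
      have h1 := h S hne hproper
      rw [hgenusOf] at h1
      rw [hsumN]
      linarith
    have hSle : ∀ S : Finset V, (G.edgesIn S).card ≤ ∑ v ∈ S, N v := by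
      intro S
      rcases S.eq_empty_or_nonempty with rfl | hne
      · simp [Multigraph.edgesIn]
      by_cases hproper : S = univ
      · subst hproper
        rw [hEuniv, card_univ, htot]
      · have h1 := hstrictS S hne hproper
        exact_mod_cast h1.le
    obtain ⟨b, hb⟩ := exists_orientation (G := G) N htot hSle
    refine ⟨bOrient G b, ?_, ?_⟩
    · apply totallyCyclic_of_cuts
      intro S hne hproper
      have h1 := sum_indeg (bOrient G b) S
      have h2 : ∑ v ∈ S, ((bOrient G b).indeg v : ℤ) = ∑ v ∈ S, (N v : ℤ) := by
        exact Finset.sum_congr rfl (fun v _ => by rw [hb v])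
      have h3 := hstrictS S hne hproper
      have h4 : (0:ℤ) < ((univ.filter fun e => G.InCut S e ∧ (bOrient G b).head e ∈ S).card : ℤ) := by
        linarith
      have h5 : 0 < (univ.filter fun e => G.InCut S e ∧ (bOrient G b).head e ∈ S).card := by
        exact_mod_cast h4
      obtain ⟨e, he⟩ := Finset.card_pos.mp h5
      rw [mem_filter] at he
      exact ⟨e, he.2.1, he.2.2⟩
    · funext v
      show d v = (w v : ℤ) - 1 + ((bOrient G b).indeg v : ℤ)
      rw [hb v, hNcast v]
      ring
  · -- a totally cyclic orientation gives a stable degree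
    rintro ⟨O, htc, rfl⟩ S hne hproper
    rw [hgenusOf]
    obtain ⟨e, hcut, hhd⟩ := cut_head_exists O htc hconn hne hproper
    have h4 : 0 < (univ.filter fun e => G.InCut S e ∧ O.head e ∈ S).card :=
      Finset.card_pos.mpr ⟨e, mem_filter.mpr ⟨mem_univ e, hcut, hhd⟩⟩
    have h4' : (1:ℤ) ≤ ((univ.filter fun e => G.InCut S e ∧ O.head e ∈ S).card : ℤ) := by
      exact_mod_cast h4
    have h1 := sum_indeg O S
    have h5 : ∑ v ∈ S, O.multidegree w v
        = ∑ v ∈ S, (w v : ℤ) - S.card + ∑ v ∈ S, (O.indeg v : ℤ) := by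
      simp only [GraphOrientation.multidegree]
      rw [Finset.sum_add_distrib, Finset.sum_sub_distrib, Finset.sum_const]
      push_cast
      ring
    rw [h5]
    linarith
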